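/- Let R be a commutative ring, equip the free algebra R⟨X₁,…,Xₙ⟩ with a weight ℕ-gradation determined by positive integer degrees deg Xᵢ = nᵢ, let ≺ be an ℕ-graded monomial ordering on the standard monomial basis B, and let G be a monic Gröbner basis of the ideal I = ⟨G⟩. If the ℕ-leading homogeneous algebra R⟨X₁,…,Xₙ⟩/⟨LH(G)⟩ is a domain (nontrivial with no nonzero zero-divisors), then A = R⟨X₁,…,Xₙ⟩/I is a domain. -/

import Mathlib

noncomputable section
open MonoidAlgebra
open scoped Classical

/-- Words in the alphabet `X_1, ..., X_n`: the standard monomial basis `B`. -/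
abbrev Word (n : ℕ) : Type := FreeMonoid (Fin n)

/-- The free `R`-algebra `R⟨X_1, ..., X_n⟩`, realized as the monoid algebra of the
free monoid on `n` letters over `R`. -/
abbrev FreeAlg (R : Type) [CommRing R] (n : ℕ) : Type := MonoidAlgebra R (Word n)

variable {R : Type} [CommRing R] {n : ℕ}

/-- The monomial (word) `w` viewed as an element of the free algebra. -/
def mono (R : Type) [CommRing R] {n : ℕ} (w : Word n) : FreeAlg R n :=
  MonoidAlgebra.of R (Word n) w

/-- A monomial ordering: a well-ordering on words compatible with two-sided multiplication. -/
def IsMonomialOrder (n : ℕ) [LinearOrder (Word n)] : Prop :=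
  WellFoundedLT (Word n) ∧ ∀ w u v s : Word n, u < v → w * u * s < w * v * s

/-- The leading monomial of `f` (with junk value `1` for `f = 0`). -/
def LMon [LinearOrder (Word n)] (f : FreeAlg R n) : Word n :=
  if h : f = 0 then 1 else f.coeff.support.max' (Finsupp.support_nonempty_iff.mpr (mt MonoidAlgebra.coeff_eq_zero.mp h))

/-- The leading coefficient of `f`. -/
def LCoef [LinearOrder (Word n)] (f : FreeAlg R n) : R := f.coeff (LMon f)

/-- `f` is monic: it is nonzero and its leading coefficient is `1`. -/
def IsMonic [LinearOrder (Word n)] (f : FreeAlg R n) : Prop := f ≠ 0 ∧ LCoef f = 1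

/-- `v` divides `u` as words: `u = w * v * s` for some words `w, s`. -/
def MDvd {n : ℕ} (v u : Word n) : Prop := ∃ w s : Word n, u = w * v * s

/-- `G` is a monic Gröbner basis of the two-sided ideal `I`: every element of `G` is monic,
and the leading monomial of every nonzero element of `I` is divisible by the leading
monomial of some element of `G`. -/
def IsMonicGB [LinearOrder (Word n)] (G : Set (FreeAlg R n))
    (I : TwoSidedIdeal (FreeAlg R n)) : Prop :=
  (∀ g ∈ G, IsMonic g) ∧ ∀ f ∈ I, f ≠ 0 → ∃ g ∈ G, MDvd (LMon g) (LMon f)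

/-- The weight degree of a word, for the weights `deg Xᵢ = d i`. -/
def wdeg {n : ℕ} (d : Fin n → ℕ) (w : Word n) : ℕ := ((FreeMonoid.toList w).map d).sum

/-- The maximal weight degree occurring in `f`. -/
def maxdeg (d : Fin n → ℕ) (f : FreeAlg R n) : ℕ := f.coeff.support.sup (wdeg d)

/-- The ℕ-leading homogeneous element `LH(f)` of `f`: the sum of the terms of `f` of
maximal weight degree. -/
def LH (d : Fin n → ℕ) (f : FreeAlg R n) : FreeAlg R n :=
  ∑ w ∈ f.coeff.support.filter (fun w => wdeg d w = maxdeg d f), MonoidAlgebra.single w (f.coeff w)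

/-- The set `LH(S)` of leading homogeneous elements of the nonzero elements of `S`. -/
def LHset (d : Fin n → ℕ) (S : Set (FreeAlg R n)) : Set (FreeAlg R n) :=
  {x | ∃ f ∈ S, f ≠ 0 ∧ x = LH d f}

/-- An ℕ-graded monomial ordering with respect to the weights `d`: a monomial ordering
such that words of smaller degree are smaller. -/
def IsGradedMonomialOrder {n : ℕ} (d : Fin n → ℕ) [LinearOrder (Word n)] : Prop :=
  IsMonomialOrder n ∧ ∀ u v : Word n, wdeg d u < wdeg d v → u < v

/-- The quotient ring of the free algebra by a two-sided ideal. -/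
abbrev QuotRing (I : TwoSidedIdeal (FreeAlg R n)) : Type := I.ringCon.Quotient

/-! ### Auxiliary development -/

namespace GBAux

variable (d : Fin n → ℕ)

lemma wdeg_mul (u v : Word n) : wdeg d (u * v) = wdeg d u + wdeg d v := by
  simp [wdeg, FreeMonoid.toList_mul]

lemma wdeg_one : wdeg d (1 : Word n) = 0 := by simp [wdeg, FreeMonoid.toList_one]

lemma wdeg_pos (hd : ∀ i, 0 < d i) {w : Word n} (h : w ≠ 1) : 0 < wdeg d w := by
  unfold wdeg
  cases hl : FreeMonoid.toList w with
  | nil =>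
    exact absurd (FreeMonoid.toList.injective (by simp [hl, FreeMonoid.toList_one])) h
  | cons a t =>
    simp only [hl, List.map_cons, List.sum_cons]
    exact lt_of_lt_of_le (hd a) (Nat.le_add_right _ _)

/-- The degree-`m` homogeneous component. -/
def hcomp (m : ℕ) (f : FreeAlg R n) : FreeAlg R n :=
  MonoidAlgebra.ofCoeff (f.coeff.filter (fun w => wdeg d w = m))

lemma hcomp_apply (m : ℕ) (f : FreeAlg R n) (w : Word n) :
    (hcomp d m f).coeff w = if wdeg d w = m then f.coeff w else 0 := Finsupp.filter_apply _ _ _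

lemma hcomp_zero (m : ℕ) : hcomp d m (0 : FreeAlg R n) = 0 := by
  ext w; rw [hcomp_apply]; simp

lemma hcomp_add (m : ℕ) (f g : FreeAlg R n) :
    hcomp d m (f + g) = hcomp d m f + hcomp d m g := MonoidAlgebra.ext Finsupp.filter_add

lemma hcomp_neg (m : ℕ) (f : FreeAlg R n) : hcomp d m (-f) = -hcomp d m f :=
  MonoidAlgebra.ext (Finsupp.filter_neg _ _)

lemma hcomp_smul (m : ℕ) (c : R) (f : FreeAlg R n) :
    hcomp d m (c • f) = c • hcomp d m f := MonoidAlgebra.ext Finsupp.filter_smul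

lemma hcomp_sum {ι : Type*} (m : ℕ) (s : Finset ι) (F : ι → FreeAlg R n) :
    hcomp d m (∑ i ∈ s, F i) = ∑ i ∈ s, hcomp d m (F i) := by
  classical
  induction s using Finset.induction with
  | empty => simp [hcomp_zero]
  | insert _ _ hx ih =>
    rw [Finset.sum_insert hx, Finset.sum_insert hx, hcomp_add, ih]

def IsHomog (m : ℕ) (f : FreeAlg R n) : Prop := ∀ w ∈ f.coeff.support, wdeg d w = m

lemma isHomog_hcomp (m : ℕ) (f : FreeAlg R n) : IsHomog d m (hcomp d m f) := by
  intro w hw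
  rw [Finsupp.mem_support_iff, hcomp_apply] at hw
  by_contra h; simp [h] at hw

lemma isHomog_single (v : Word n) (b : R) :
    IsHomog d (wdeg d v) (MonoidAlgebra.single v b : FreeAlg R n) := by
  intro w hw
  rw [Finsupp.mem_support_iff, MonoidAlgebra.coeff_single, Finsupp.single_apply] at hw
  rcases eq_or_ne v w with rfl | hne
  · rfl
  · simp [hne] at hw

lemma hcomp_eq_self {m : ℕ} {f : FreeAlg R n} (h : IsHomog d m f) : hcomp d m f = f := by
  ext w
  rw [hcomp_apply]
  split_ifs with hw
  · rfl
  · by_contra hne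
    exact hw (h w (Finsupp.mem_support_iff.mpr fun h0 => hne h0.symm))

lemma hcomp_eq_zero {k m : ℕ} {f : FreeAlg R n} (h : IsHomog d k f) (hk : k ≠ m) :
    hcomp d m f = 0 := by
  ext w
  rw [hcomp_apply]
  split_ifs with hw
  · by_contra hne
    exact hk ((h w (Finsupp.mem_support_iff.mpr hne)).symm.trans hw)
  · rfl

lemma wdeg_le_maxdeg {f : FreeAlg R n} {w : Word n} (hw : w ∈ f.coeff.support) :
    wdeg d w ≤ maxdeg d f := Finset.le_sup hw

lemma hcomp_eq_zero_of_lt {m : ℕ} {f : FreeAlg R n} (h : maxdeg d f < m) :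
    hcomp d m f = 0 := by
  ext w
  rw [hcomp_apply]
  split_ifs with hw
  · by_contra hne
    exact absurd (hw ▸ wdeg_le_maxdeg d (Finsupp.mem_support_iff.mpr hne)) (not_le.mpr h)
  · rfl

lemma le_maxdeg_of_hcomp_ne_zero {m : ℕ} {f : FreeAlg R n} (h : hcomp d m f ≠ 0) :
    m ≤ maxdeg d f := by
  obtain ⟨w, hw⟩ := Finsupp.support_nonempty_iff.mpr (mt MonoidAlgebra.coeff_eq_zero.mp h)
  have h1 : wdeg d w = m := isHomog_hcomp d m f w hw
  have h2 : w ∈ f.coeff.support := by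
    rw [Finsupp.mem_support_iff, hcomp_apply] at hw
    rw [Finsupp.mem_support_iff]
    intro h0; simp [h0] at hw
  exact h1 ▸ wdeg_le_maxdeg d h2

lemma sum_hcomp (f : FreeAlg R n) :
    ∑ k ∈ Finset.range (maxdeg d f + 1), hcomp d k f = f := by
  ext w
  rw [MonoidAlgebra.coeff_sum, Finset.sum_apply']
  simp only [hcomp_apply]
  rw [Finset.sum_ite_eq (Finset.range (maxdeg d f + 1)) (wdeg d w) (fun _ => f.coeff w)]
  split_ifs with hw
  · rfl
  · symm
    by_contra hne
    exact hw (Finset.mem_range.mpr (Nat.lt_succ_of_le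
      (wdeg_le_maxdeg d (Finsupp.mem_support_iff.mpr hne))))

lemma LH_eq_hcomp (f : FreeAlg R n) : LH d f = hcomp d (maxdeg d f) f :=
  MonoidAlgebra.ext (by rw [LH, MonoidAlgebra.coeff_sum]; exact (Finsupp.filter_eq_sum _ _).symm)

lemma isHomog_LH (f : FreeAlg R n) : IsHomog d (maxdeg d f) (LH d f) := by
  rw [LH_eq_hcomp]; exact isHomog_hcomp d _ f

lemma isHomog_mul {i j : ℕ} {x y : FreeAlg R n} (hx : IsHomog d i x) (hy : IsHomog d j y) :
    IsHomog d (i + j) (x * y) := by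
  intro w hw
  obtain ⟨u, hu, v, hv, rfl⟩ := Finset.mem_mul.mp (MonoidAlgebra.support_coeff_mul_subset x y hw)
  rw [wdeg_mul, hx u hu, hy v hv]

lemma maxdeg_le_of_homog {i : ℕ} {x : FreeAlg R n} (hx : IsHomog d i x) : maxdeg d x ≤ i :=
  Finset.sup_le fun w hw => (hx w hw).le

lemma maxdeg_mul_le (x y : FreeAlg R n) : maxdeg d (x * y) ≤ maxdeg d x + maxdeg d y := by
  apply Finset.sup_le
  intro w hw
  obtain ⟨u, hu, v, hv, rfl⟩ := Finset.mem_mul.mp (MonoidAlgebra.support_coeff_mul_subset x y hw)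
  rw [wdeg_mul]
  exact Nat.add_le_add (wdeg_le_maxdeg d hu) (wdeg_le_maxdeg d hv)

lemma maxdeg_zero : maxdeg d (0 : FreeAlg R n) = 0 := by simp [maxdeg]

lemma maxdeg_add_le (x y : FreeAlg R n) :
    maxdeg d (x + y) ≤ max (maxdeg d x) (maxdeg d y) := by
  apply Finset.sup_le
  intro w hw
  rcases Finset.mem_union.mp (Finsupp.support_add (show w ∈ (x.coeff + y.coeff).support from hw)) with h | h
  · exact le_max_of_le_left (wdeg_le_maxdeg d h)
  · exact le_max_of_le_right (wdeg_le_maxdeg d h)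

lemma maxdeg_neg (x : FreeAlg R n) : maxdeg d (-x) = maxdeg d x := by
  unfold maxdeg; rw [MonoidAlgebra.coeff_neg, Finsupp.support_neg]

/-- Left multiplication by a homogeneous element shifts components. -/
lemma hcomp_homog_mul {i : ℕ} {x : FreeAlg R n} (hx : IsHomog d i x) (l : ℕ)
    (y : FreeAlg R n) : hcomp d (i + l) (x * y) = x * hcomp d l y := by
  induction y using MonoidAlgebra.induction with
  | zero => simp [hcomp_zero]
  | single_add v b y _ _ ih =>
    rw [mul_add, hcomp_add, ih, hcomp_add, mul_add]
    congr 1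
    have hs := isHomog_single d v b (R := R)
    have hxy := isHomog_mul d hx hs
    rcases eq_or_ne (wdeg d v) l with he | hne
    · subst he
      rw [hcomp_eq_self d hxy, hcomp_eq_self d hs]
    · rw [hcomp_eq_zero d hxy (show i + wdeg d v ≠ i + l by omega),
        hcomp_eq_zero d hs hne, mul_zero]

lemma hcomp_mul_homog {j : ℕ} {y : FreeAlg R n} (hy : IsHomog d j y) (l : ℕ)
    (x : FreeAlg R n) : hcomp d (l + j) (x * y) = hcomp d l x * y := by
  induction x using MonoidAlgebra.induction with
  | zero => simp [hcomp_zero]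
  | single_add v b x _ _ ih =>
    rw [add_mul, hcomp_add, ih, hcomp_add, add_mul]
    congr 1
    have hs := isHomog_single d v b (R := R)
    have hxy := isHomog_mul d hs hy
    rcases eq_or_ne (wdeg d v) l with he | hne
    · subst he
      rw [hcomp_eq_self d hxy, hcomp_eq_self d hs]
    · rw [hcomp_eq_zero d hxy (show wdeg d v + j ≠ l + j by omega),
        hcomp_eq_zero d hs hne, zero_mul]

lemma top_mul (x y : FreeAlg R n) :
    hcomp d (maxdeg d x + maxdeg d y) (x * y) = LH d x * LH d y := by
  have hx : x * y = ∑ k ∈ Finset.range (maxdeg d x + 1), hcomp d k x * y := by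
    rw [← Finset.sum_mul, sum_hcomp]
  rw [hx, hcomp_sum, Finset.sum_eq_single (maxdeg d x)]
  · rw [hcomp_homog_mul d (isHomog_hcomp d (maxdeg d x) x) (maxdeg d y) y,
      ← LH_eq_hcomp, ← LH_eq_hcomp]
  · intro k hk hne
    have hk' : k ≤ maxdeg d x := Nat.lt_succ_iff.mp (Finset.mem_range.mp hk)
    have h1 : maxdeg d x + maxdeg d y = k + (maxdeg d x + maxdeg d y - k) := by omega
    rw [h1, hcomp_homog_mul d (isHomog_hcomp d k x),
      hcomp_eq_zero_of_lt d (show maxdeg d y < maxdeg d x + maxdeg d y - k by omega), mul_zero]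
  · intro h
    exact absurd (Finset.self_mem_range_succ (maxdeg d x)) h

section Ord

variable [LinearOrder (Word n)]

lemma LMon_mem {f : FreeAlg R n} (hf : f ≠ 0) : LMon f ∈ f.coeff.support := by
  rw [LMon, dif_neg hf]; exact Finset.max'_mem _ _

lemma le_LMon {f : FreeAlg R n} (hf : f ≠ 0) {w : Word n} (hw : w ∈ f.coeff.support) :
    w ≤ LMon f := by
  rw [LMon, dif_neg hf]; exact Finset.le_max' _ _ hw

lemma LCoef_ne_zero {f : FreeAlg R n} (hf : f ≠ 0) : f.coeff (LMon f) ≠ 0 :=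
  Finsupp.mem_support_iff.mp (LMon_mem hf)

lemma LMon_eq {f : FreeAlg R n} (hf : f ≠ 0) {w : Word n} (hmem : w ∈ f.coeff.support)
    (hle : ∀ u ∈ f.coeff.support, u ≤ w) : LMon f = w := by
  refine le_antisymm ?_ (le_LMon hf hmem)
  rw [LMon, dif_neg hf]
  exact Finset.max'_le _ _ _ hle

lemma wdeg_LMon (hgr : ∀ u v : Word n, wdeg d u < wdeg d v → u < v)
    {f : FreeAlg R n} (hf : f ≠ 0) : wdeg d (LMon f) = maxdeg d f := by
  refine le_antisymm (wdeg_le_maxdeg d (LMon_mem hf)) (Finset.sup_le fun w hw => ?_)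
  by_contra hc
  exact absurd (hgr _ _ (not_le.mp hc)) (not_lt.mpr (le_LMon hf hw))

lemma maxdeg_le_of_LMon_le (hgr : ∀ u v : Word n, wdeg d u < wdeg d v → u < v)
    {f h : FreeAlg R n} (hf : f ≠ 0) (hh : h ≠ 0) (hle : LMon h ≤ LMon f) :
    maxdeg d h ≤ maxdeg d f := by
  rw [← wdeg_LMon d hgr hf, ← wdeg_LMon d hgr hh]
  by_contra hc
  exact absurd (hgr _ _ (not_le.mp hc)) (not_lt.mpr hle)

lemma mulmono_le (hmul : ∀ w u v s : Word n, u < v → w * u * s < w * v * s)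
    {u v : Word n} (w s : Word n) (h : u ≤ v) : w * u * s ≤ w * v * s := by
  rcases eq_or_lt_of_le h with rfl | h
  · exact le_rfl
  · exact (hmul w u v s h).le

lemma phi_inj (w s : Word n) : Function.Injective (fun u : Word n => w * u * s) := by
  intro u v h
  simp only [] at h
  have h2 := congrArg FreeMonoid.toList h
  simp only [FreeMonoid.toList_mul] at h2
  exact FreeMonoid.toList.injective
    (List.append_cancel_left (List.append_cancel_right h2))

lemma mono_mul_mul (w s : Word n) (f : FreeAlg R n) :
    mono R w * f * mono R s = MonoidAlgebra.mapDomain (fun u => w * u * s) f := by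
  induction f using MonoidAlgebra.induction with
  | zero => simp [mono, MonoidAlgebra.mapDomain_zero]
  | single_add v b f _ _ ih =>
    rw [mul_add, add_mul, ih, MonoidAlgebra.mapDomain_add]
    congr 1
    show mono R w * MonoidAlgebra.single v b * mono R s = _
    rw [mono, mono, MonoidAlgebra.of_apply, MonoidAlgebra.of_apply,
      MonoidAlgebra.single_mul_single, MonoidAlgebra.single_mul_single,
      one_mul, mul_one, MonoidAlgebra.mapDomain_single]

lemma mmm_apply (w s : Word n) (f : FreeAlg R n) (u : Word n) :
    (mono R w * f * mono R s).coeff (w * u * s) = f.coeff u := by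
  rw [mono_mul_mul]
  exact Finsupp.mapDomain_apply (phi_inj w s) f.coeff u

lemma mmm_support (w s : Word n) (f : FreeAlg R n) :
    (mono R w * f * mono R s).coeff.support = f.coeff.support.image (fun u => w * u * s) := by
  rw [mono_mul_mul]
  exact Finsupp.mapDomain_support_of_injective (phi_inj w s) f.coeff

lemma mmm_ne_zero (w s : Word n) {f : FreeAlg R n} (hf : f ≠ 0) :
    mono R w * f * mono R s ≠ 0 := by
  intro h
  apply LCoef_ne_zero hf
  rw [← mmm_apply w s f (LMon f), h, MonoidAlgebra.coeff_zero, Finsupp.coe_zero, Pi.zero_apply]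

lemma LMon_mmm (hmul : ∀ w u v s : Word n, u < v → w * u * s < w * v * s)
    (w s : Word n) {f : FreeAlg R n} (hf : f ≠ 0) :
    LMon (mono R w * f * mono R s) = w * LMon f * s := by
  refine LMon_eq (mmm_ne_zero w s hf) ?_ ?_
  · rw [mmm_support w s]
    exact Finset.mem_image_of_mem _ (LMon_mem hf)
  · intro u hu
    rw [mmm_support w s] at hu
    obtain ⟨v, hv, rfl⟩ := Finset.mem_image.mp hu
    exact mulmono_le hmul w s (le_LMon hf hv)

lemma isHomog_mono (w : Word n) : IsHomog d (wdeg d w) (mono R w) := by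
  rw [mono, MonoidAlgebra.of_apply]
  exact isHomog_single d w 1

/-- If `hcomp d m q = p ≠ 0` and `maxdeg d q ≤ m`, then `q ≠ 0`, has top degree `m`,
and the same leading monomial as `p`. -/
lemma LMon_of_top (hgr : ∀ u v : Word n, wdeg d u < wdeg d v → u < v)
    {m : ℕ} {p q : FreeAlg R n} (hq : maxdeg d q ≤ m) (hc : hcomp d m q = p)
    (hp : p ≠ 0) : q ≠ 0 ∧ maxdeg d q = m ∧ LH d q = p ∧ LMon q = LMon p := by
  have hsub : p.coeff.support ⊆ q.coeff.support := by
    intro w hw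
    rw [Finsupp.mem_support_iff] at hw ⊢
    intro h0
    apply hw
    rw [← hc, hcomp_apply]
    split_ifs <;> simp [h0]
  have hq0 : q ≠ 0 := by
    intro h0
    rw [h0, hcomp_zero] at hc
    exact hp hc.symm
  have hdeg : ∀ w ∈ p.coeff.support, wdeg d w = m := by
    intro w hw
    rw [Finsupp.mem_support_iff] at hw
    by_contra hne
    apply hw
    rw [← hc, hcomp_apply, if_neg hne]
  have hmax : maxdeg d q = m := by
    refine le_antisymm hq ?_
    obtain ⟨w, hw⟩ := Finsupp.support_nonempty_iff.mpr (mt MonoidAlgebra.coeff_eq_zero.mp hp)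
    exact (hdeg w hw) ▸ wdeg_le_maxdeg d (hsub hw)
  have hLH : LH d q = p := by rw [LH_eq_hcomp, hmax, hc]
  refine ⟨hq0, hmax, hLH, ?_⟩
  have h1 : LMon q ∈ p.coeff.support := by
    rw [Finsupp.mem_support_iff, ← hc, hcomp_apply,
      if_pos (hmax ▸ wdeg_LMon d hgr hq0)]
    exact LCoef_ne_zero hq0
  exact le_antisymm (le_LMon hp h1) (le_LMon hq0 (hsub (LMon_mem hp)))

lemma LMon_LH (hgr : ∀ u v : Word n, wdeg d u < wdeg d v → u < v)
    {f : FreeAlg R n} (hf : f ≠ 0) : LH d f ≠ 0 ∧ LMon (LH d f) = LMon f := by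
  have hne : LH d f ≠ 0 := by
    intro h0
    have h1 : (LH d f).coeff (LMon f) = f.coeff (LMon f) := by
      rw [LH_eq_hcomp, hcomp_apply, if_pos (wdeg_LMon d hgr hf)]
    rw [h0, MonoidAlgebra.coeff_zero, Finsupp.coe_zero, Pi.zero_apply] at h1
    exact LCoef_ne_zero hf h1.symm
  have h := LMon_of_top d hgr (le_refl (maxdeg d f)) (LH_eq_hcomp d f).symm hne
  exact ⟨hne, h.2.2.2.symm⟩

lemma smul_mem' (I : TwoSidedIdeal (FreeAlg R n)) (c : R) {x : FreeAlg R n} (hx : x ∈ I) :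
    c • x ∈ I := by
  have h : c • x = MonoidAlgebra.single (1 : Word n) c * x := by
    ext u
    rw [MonoidAlgebra.coeff_smul_apply, MonoidAlgebra.coeff_single_one_mul, smul_eq_mul]
  rw [h]
  exact I.mul_mem_left _ _ hx

lemma mem_sum {I : TwoSidedIdeal (FreeAlg R n)} {ι : Type*} (s : Finset ι)
    (F : ι → FreeAlg R n) (h : ∀ i ∈ s, F i ∈ I) : ∑ i ∈ s, F i ∈ I :=
  Finset.sum_induction F (fun q => q ∈ I) (fun _ _ ha hb => I.add_mem ha hb) I.zero_mem h

lemma maxdeg_sum_le {ι : Type*} {m : ℕ} (s : Finset ι) (F : ι → FreeAlg R n)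
    (h : ∀ i ∈ s, maxdeg d (F i) ≤ m) : maxdeg d (∑ i ∈ s, F i) ≤ m :=
  Finset.sum_induction F (fun q => maxdeg d q ≤ m)
    (fun a b ha hb => (maxdeg_add_le d a b).trans (max_le ha hb))
    (by show maxdeg d 0 ≤ m; simp [maxdeg]) h

/-- Cancellation of the leading term against a monic element. -/
lemma sub_lead_lt (hmul : ∀ w u v s : Word n, u < v → w * u * s < w * v * s)
    {f g : FreeAlg R n} (hf : f ≠ 0) (hg : g ≠ 0) (hg1 : LCoef g = 1)
    {w s : Word n} (hL : LMon f = w * LMon g * s) :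
    f - LCoef f • (mono R w * g * mono R s) = 0 ∨
      (f - LCoef f • (mono R w * g * mono R s) ≠ 0 ∧
        LMon (f - LCoef f • (mono R w * g * mono R s)) < LMon f) := by
  set t := LCoef f • (mono R w * g * mono R s) with ht
  have hLt : t.coeff (LMon f) = LCoef f := by
    rw [ht, MonoidAlgebra.coeff_smul_apply, hL, mmm_apply w s, smul_eq_mul]
    have : g.coeff (LMon g) = LCoef g := rfl
    rw [this, hg1, mul_one]
  have hzero : (f - t).coeff (LMon f) = 0 := by
    rw [MonoidAlgebra.coeff_sub, Finsupp.sub_apply, hLt]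
    show LCoef f - LCoef f = 0
    ring
  have hsupp : ∀ u ∈ (f - t).coeff.support, u < LMon f := by
    intro u hu
    have hne : u ≠ LMon f := by
      rintro rfl
      rw [Finsupp.mem_support_iff] at hu
      exact hu hzero
    have hmem := Finsupp.support_sub (show u ∈ (f.coeff - t.coeff).support from hu)
    rcases Finset.mem_union.mp hmem with h | h
    · exact lt_of_le_of_ne (le_LMon hf h) hne
    · have h2 : u ∈ (mono R w * g * mono R s).coeff.support :=
        Finsupp.support_smul (show u ∈ (LCoef f • (mono R w * g * mono R s).coeff).support from h)
      rw [mmm_support w s] at h2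
      obtain ⟨v, hv, rfl⟩ := Finset.mem_image.mp h2
      exact lt_of_le_of_ne (hL ▸ mulmono_le hmul w s (le_LMon hg hv)) hne
  by_cases h0 : f - t = 0
  · exact Or.inl h0
  · exact Or.inr ⟨h0, hsupp _ (LMon_mem h0)⟩

variable {G : Set (FreeAlg R n)}

lemma mono_g_mono_mem (w s : Word n) {g : FreeAlg R n} (hg : g ∈ G) :
    mono R w * g * mono R s ∈ TwoSidedIdeal.span G :=
  (TwoSidedIdeal.span G).mul_mem_right _ _
    ((TwoSidedIdeal.span G).mul_mem_left _ _ (TwoSidedIdeal.subset_span hg))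

/-- Reduction to a normal form modulo the ideal. -/
lemma exists_reduced (hwfl : WellFoundedLT (Word n))
    (hmul : ∀ w u v s : Word n, u < v → w * u * s < w * v * s)
    (hGB : IsMonicGB G (TwoSidedIdeal.span G)) (f : FreeAlg R n) :
    ∃ f', f - f' ∈ TwoSidedIdeal.span G ∧
      (f' = 0 ∨ ∀ g ∈ G, ¬ MDvd (LMon g) (LMon f')) := by
  have key : ∀ w : Word n, ∀ f : FreeAlg R n, LMon f = w →
      ∃ f', f - f' ∈ TwoSidedIdeal.span G ∧
        (f' = 0 ∨ ∀ g ∈ G, ¬ MDvd (LMon g) (LMon f')) := by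
    intro w
    refine hwfl.wf.induction
      (C := fun w => ∀ f : FreeAlg R n, LMon f = w →
        ∃ f', f - f' ∈ TwoSidedIdeal.span G ∧
          (f' = 0 ∨ ∀ g ∈ G, ¬ MDvd (LMon g) (LMon f'))) w ?_
    intro w ih f hLf
    by_cases hf0 : f = 0
    · exact ⟨0, by simpa [hf0] using (TwoSidedIdeal.span G).zero_mem, Or.inl rfl⟩
    by_cases hred : ∀ g ∈ G, ¬ MDvd (LMon g) (LMon f)
    · exact ⟨f, by simpa using (TwoSidedIdeal.span G).zero_mem, Or.inr hred⟩
    push_neg at hred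
    obtain ⟨g, hgG, w', s', hL⟩ := hred
    obtain ⟨hg0, hg1⟩ := hGB.1 g hgG
    have htI : LCoef f • (mono R w' * g * mono R s') ∈ TwoSidedIdeal.span G :=
      smul_mem' _ _ (mono_g_mono_mem w' s' hgG)
    set h := f - LCoef f • (mono R w' * g * mono R s') with hh
    rcases sub_lead_lt hmul hf0 hg0 hg1 hL with h0 | ⟨hne, hlt⟩
    · refine ⟨0, ?_, Or.inl rfl⟩
      rw [sub_zero]
      have h1 : f = LCoef f • (mono R w' * g * mono R s') := by
        have := sub_eq_zero.mp h0
        exact this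
      rw [h1]; exact htI
    · obtain ⟨f', hf'I, hf'red⟩ := ih (LMon h) (hLf ▸ hlt) h rfl
      refine ⟨f', ?_, hf'red⟩
      have heq : f - f' = (f - h) + (h - f') := (sub_add_sub_cancel f h f').symm
      rw [heq]
      refine (TwoSidedIdeal.span G).add_mem ?_ hf'I
      rw [hh, sub_sub_cancel]
      exact htI
  exact key (LMon f) f rfl

/-- The leading homogeneous part of any nonzero element of `I = ⟨G⟩` lies in `⟨LH(G)⟩`. -/
lemma LH_mem_span (hwfl : WellFoundedLT (Word n))
    (hmul : ∀ w u v s : Word n, u < v → w * u * s < w * v * s)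
    (hgr : ∀ u v : Word n, wdeg d u < wdeg d v → u < v)
    (hGB : IsMonicGB G (TwoSidedIdeal.span G)) :
    ∀ f ∈ TwoSidedIdeal.span G, f ≠ 0 →
      LH d f ∈ TwoSidedIdeal.span (LHset d G) := by
  have key : ∀ w : Word n, ∀ f : FreeAlg R n, LMon f = w →
      f ∈ TwoSidedIdeal.span G → f ≠ 0 →
      LH d f ∈ TwoSidedIdeal.span (LHset d G) := by
    intro w
    refine hwfl.wf.induction
      (C := fun w => ∀ f : FreeAlg R n, LMon f = w →
        f ∈ TwoSidedIdeal.span G → f ≠ 0 →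
        LH d f ∈ TwoSidedIdeal.span (LHset d G)) w ?_
    intro w ih f hLf hfI hf0
    obtain ⟨g, hgG, w', s', hL⟩ := hGB.2 f hfI hf0
    obtain ⟨hg0, hg1⟩ := hGB.1 g hgG
    set m := maxdeg d f with hmdef
    set t := LCoef f • (mono R w' * g * mono R s') with ht
    set h := f - t with hh
    have htI : t ∈ TwoSidedIdeal.span G := smul_mem' _ _ (mono_g_mono_mem w' s' hgG)
    have hhI : h ∈ TwoSidedIdeal.span G := (TwoSidedIdeal.span G).sub_mem hfI htI
    have hm : m = wdeg d w' + maxdeg d g + wdeg d s' := by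
      rw [hmdef, ← wdeg_LMon d hgr hf0, hL, wdeg_mul, wdeg_mul, wdeg_LMon d hgr hg0]
    have hLHt : hcomp d m t = LCoef f • (mono R w' * LH d g * mono R s') := by
      rw [ht, hcomp_smul, hm, hcomp_mul_homog d (isHomog_mono d s'),
        hcomp_homog_mul d (isHomog_mono d w'), ← LH_eq_hcomp]
    have hJt : LCoef f • (mono R w' * LH d g * mono R s') ∈
        TwoSidedIdeal.span (LHset d G) :=
      smul_mem' _ _ ((TwoSidedIdeal.span (LHset d G)).mul_mem_right _ _
        ((TwoSidedIdeal.span (LHset d G)).mul_mem_left _ _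
          (TwoSidedIdeal.subset_span ⟨g, hgG, hg0, rfl⟩)))
    have hcomph : hcomp d m h ∈ TwoSidedIdeal.span (LHset d G) := by
      by_cases h0 : h = 0
      · rw [h0, hcomp_zero]; exact (TwoSidedIdeal.span (LHset d G)).zero_mem
      · rcases sub_lead_lt hmul hf0 hg0 hg1 hL with he | ⟨hne, hlt⟩
        · exact absurd he h0
        · have hle : maxdeg d h ≤ m := maxdeg_le_of_LMon_le d hgr hf0 h0 hlt.le
          rcases lt_or_eq_of_le hle with hlt2 | heq
          · rw [hcomp_eq_zero_of_lt d hlt2]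
            exact (TwoSidedIdeal.span (LHset d G)).zero_mem
          · rw [← heq, ← LH_eq_hcomp]
            exact ih (LMon h) (hLf ▸ hlt) h rfl hhI h0
    have hfht : f = h + t := by rw [hh]; abel
    have hsplit : hcomp d m f = hcomp d m h + hcomp d m t := by
      conv_lhs => rw [hfht]
      rw [hcomp_add]
    rw [LH_eq_hcomp, ← hmdef, hsplit, hLHt]
    exact (TwoSidedIdeal.span (LHset d G)).add_mem hcomph hJt
  exact fun f hf h0 => key (LMon f) f rfl hf h0

/-- Degree-`m` components of elements of `⟨LH(G)⟩` are approximated by elements of `⟨G⟩`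
of degree at most `m`. -/
lemma comp_approx (hmonic : ∀ g ∈ G, IsMonic g) :
    ∀ z ∈ TwoSidedIdeal.span (LHset d G), ∀ m : ℕ,
      ∃ q ∈ TwoSidedIdeal.span G, maxdeg d q ≤ m ∧ hcomp d m q = hcomp d m z := by
  intro z hz
  rw [TwoSidedIdeal.mem_span_iff_mem_addSubgroup_closure] at hz
  refine AddSubgroup.closure_induction ?_ ?_ ?_ ?_ hz
  · -- base case
    intro x hx
    obtain ⟨y, hy, b, -, rfl⟩ := Set.mem_mul.mp hx
    obtain ⟨a, -, p, hpS, rfl⟩ := Set.mem_mul.mp hy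
    obtain ⟨g, hgG, hg0, rfl⟩ := hpS
    intro m
    refine ⟨∑ i ∈ Finset.range (maxdeg d a + 1), ∑ j ∈ Finset.range (maxdeg d b + 1),
      if i + maxdeg d g + j = m then hcomp d i a * g * hcomp d j b else 0, ?_, ?_, ?_⟩
    · refine mem_sum _ _ fun i _ => mem_sum _ _ fun j _ => ?_
      split_ifs
      · exact (TwoSidedIdeal.span G).mul_mem_right _ _
          ((TwoSidedIdeal.span G).mul_mem_left _ _ (TwoSidedIdeal.subset_span hgG))
      · exact (TwoSidedIdeal.span G).zero_mem
    · refine maxdeg_sum_le d _ _ fun i _ => maxdeg_sum_le d _ _ fun j _ => ?_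
      split_ifs with hij
      · refine le_trans (maxdeg_mul_le d _ _) ?_
        rw [← hij]
        exact add_le_add (le_trans (maxdeg_mul_le d _ _)
          (add_le_add (maxdeg_le_of_homog d (isHomog_hcomp d i a)) le_rfl))
          (maxdeg_le_of_homog d (isHomog_hcomp d j b))
      · rw [maxdeg_zero]; exact Nat.zero_le m
    · have hab : a * LH d g * b =
          ∑ i ∈ Finset.range (maxdeg d a + 1), ∑ j ∈ Finset.range (maxdeg d b + 1),
            hcomp d i a * LH d g * hcomp d j b := by
        conv_lhs => rw [← sum_hcomp d a, ← sum_hcomp d b]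
        rw [Finset.sum_mul, Finset.sum_mul]
        simp only [Finset.mul_sum]
      have key1 : ∀ i j : ℕ, hcomp d m (hcomp d i a * LH d g * hcomp d j b) =
          if i + maxdeg d g + j = m then hcomp d i a * LH d g * hcomp d j b else 0 := by
        intro i j
        have hz2 : IsHomog d (i + maxdeg d g + j)
            (hcomp d i a * LH d g * hcomp d j b) :=
          isHomog_mul d (isHomog_mul d (isHomog_hcomp d i a) (isHomog_LH d g))
            (isHomog_hcomp d j b)
        split_ifs with hij
        · rw [← hij]; exact hcomp_eq_self d hz2
        · exact hcomp_eq_zero d hz2 hij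
      have key2 : ∀ i j : ℕ,
          hcomp d m (if i + maxdeg d g + j = m then hcomp d i a * g * hcomp d j b else 0) =
          if i + maxdeg d g + j = m then hcomp d i a * LH d g * hcomp d j b else 0 := by
        intro i j
        split_ifs with hij
        · rw [← hij, hcomp_mul_homog d (isHomog_hcomp d j b),
            hcomp_homog_mul d (isHomog_hcomp d i a), ← LH_eq_hcomp]
        · rw [hcomp_zero]
      rw [hab]
      simp only [hcomp_sum]
      exact Finset.sum_congr rfl fun i _ => Finset.sum_congr rfl fun j _ =>
        (key2 i j).trans (key1 i j).symm
  · intro m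
    refine ⟨0, (TwoSidedIdeal.span G).zero_mem, by rw [maxdeg_zero]; exact Nat.zero_le m, ?_⟩
    rw [hcomp_zero]
  · intro x y _ _ px py m
    obtain ⟨qx, hqxI, hqxle, hqxc⟩ := px m
    obtain ⟨qy, hqyI, hqyle, hqyc⟩ := py m
    exact ⟨qx + qy, (TwoSidedIdeal.span G).add_mem hqxI hqyI,
      (maxdeg_add_le d qx qy).trans (max_le hqxle hqyle),
      by rw [hcomp_add, hcomp_add, hqxc, hqyc]⟩
  · intro x _ px m
    obtain ⟨q, hqI, hqle, hqc⟩ := px m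
    exact ⟨-q, (TwoSidedIdeal.span G).neg_mem hqI, (maxdeg_neg d q) ▸ hqle,
      by rw [hcomp_neg, hcomp_neg, hqc]⟩

/-- The leading homogeneous part of a reduced nonzero element is not in `⟨LH(G)⟩`. -/
lemma reduced_LH_not_mem (hgr : ∀ u v : Word n, wdeg d u < wdeg d v → u < v)
    (hGB : IsMonicGB G (TwoSidedIdeal.span G)) {f : FreeAlg R n}
    (hf : f ≠ 0) (hred : ∀ g ∈ G, ¬ MDvd (LMon g) (LMon f)) :
    LH d f ∉ TwoSidedIdeal.span (LHset d G) := by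
  intro hmem
  obtain ⟨hLH0, hLMonLH⟩ := LMon_LH d hgr hf
  obtain ⟨q, hqI, hqle, hqc⟩ := comp_approx d hGB.1 (LH d f) hmem (maxdeg d f)
  have hc2 : hcomp d (maxdeg d f) q = LH d f := by
    rw [hqc, hcomp_eq_self d ((LH_eq_hcomp d f) ▸ isHomog_LH d f)]
  obtain ⟨hq0, -, -, hLM⟩ := LMon_of_top d hgr hqle hc2 hLH0
  obtain ⟨g, hgG, hdvd⟩ := hGB.2 q hqI hq0
  rw [hLM, hLMonLH] at hdvd
  exact hred g hgG hdvd

lemma coe_zero_iff (I : TwoSidedIdeal (FreeAlg R n)) (x : FreeAlg R n) :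
    (x : QuotRing I) = 0 ↔ x ∈ I := by
  rw [show (0 : QuotRing I) = ((0 : FreeAlg R n) : QuotRing I) from rfl, RingCon.eq,
    TwoSidedIdeal.rel_iff, sub_zero]

lemma quot_surj (I : TwoSidedIdeal (FreeAlg R n)) (a : QuotRing I) :
    ∃ x : FreeAlg R n, (x : QuotRing I) = a :=
  Quotient.exists_rep a

end Ord

end GBAux

open GBAux in
theorem domain_lifts [LinearOrder (Word n)]
    (d : Fin n → ℕ) (hd : ∀ i, 0 < d i) (hord : IsGradedMonomialOrder d)
    (G : Set (FreeAlg R n)) (hGB : IsMonicGB G (TwoSidedIdeal.span G))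
    (hD : IsDomain (QuotRing (TwoSidedIdeal.span (LHset d G)))) :
    IsDomain (QuotRing (TwoSidedIdeal.span G)) := by
  obtain ⟨⟨hwfl, hmul⟩, hgr⟩ := hord
  haveI := hD
  set J := TwoSidedIdeal.span (LHset d G) with hJ
  set I := TwoSidedIdeal.span G with hI
  have h1J : (1 : FreeAlg R n) ∉ J := by
    intro h
    have h0 : ((1 : FreeAlg R n) : QuotRing J) = 0 := (coe_zero_iff _ _).mpr h
    rw [RingCon.coe_one] at h0
    exact one_ne_zero h0
  have honeR : (1 : R) ≠ 0 := by
    intro h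
    apply h1J
    have h2 : (1 : FreeAlg R n) = 0 := by
      rw [MonoidAlgebra.one_def, h]
      exact MonoidAlgebra.single_zero _
    exact h2 ▸ J.zero_mem
  have hone0 : (1 : FreeAlg R n) ≠ 0 := by
    rw [MonoidAlgebra.one_def]
    exact fun h => honeR (MonoidAlgebra.single_eq_zero.mp h)
  have hL1 : LMon (1 : FreeAlg R n) = 1 := by
    refine LMon_eq hone0 ?_ ?_
    · rw [MonoidAlgebra.one_def]
      show (1 : Word n) ∈ (MonoidAlgebra.single (1 : Word n) (1 : R)).coeff.support
      rw [MonoidAlgebra.coeff_single, Finsupp.support_single_ne_zero _ honeR]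
      exact Finset.mem_singleton_self 1
    · intro u hu
      rw [MonoidAlgebra.one_def] at hu
      have hu' : u ∈ (Finsupp.single (1 : Word n) (1 : R)).support := hu
      rw [Finsupp.support_single_ne_zero _ honeR] at hu'
      rw [Finset.mem_singleton.mp hu']
  have h1I : (1 : FreeAlg R n) ∉ I := by
    intro h1
    obtain ⟨g, hgG, w, s, hdvd⟩ := hGB.2 1 h1 hone0
    obtain ⟨hg0, hg1⟩ := hGB.1 g hgG
    rw [hL1] at hdvd
    have hLg : LMon g = 1 := by
      have h2 := congrArg FreeMonoid.toList hdvd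
      simp only [FreeMonoid.toList_mul, FreeMonoid.toList_one] at h2
      rcases List.append_eq_nil_iff.mp h2.symm with ⟨h3, -⟩
      rcases List.append_eq_nil_iff.mp h3 with ⟨-, h4⟩
      exact FreeMonoid.toList.injective (by rw [h4, FreeMonoid.toList_one])
    have hsupp : g.coeff.support ⊆ {1} := by
      intro u hu
      rw [Finset.mem_singleton]
      by_contra hne
      have h6 : u ≤ LMon g := le_LMon hg0 hu
      rw [hLg] at h6
      have h7 := hgr 1 u (by rw [wdeg_one]; exact wdeg_pos d hd hne)
      exact absurd h7 (not_lt.mpr h6)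
    have hg11 : g.coeff 1 = 1 := by
      have : g.coeff (LMon g) = LCoef g := rfl
      rw [hLg, hg1] at this
      exact this
    have hgeq : g = MonoidAlgebra.single (1 : Word n) 1 := by
      have h8 := Finsupp.support_subset_singleton.mp hsupp
      rw [hg11] at h8
      exact MonoidAlgebra.ext h8
    have hhom : IsHomog d 0 g := by
      intro u hu
      rw [Finset.mem_singleton.mp (hsupp hu), wdeg_one]
    have hmax0 : maxdeg d g = 0 :=
      Nat.le_zero.mp (maxdeg_le_of_homog d hhom)
    have hLHg : LH d g = g := by
      rw [LH_eq_hcomp, hmax0, hcomp_eq_self d hhom]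
    apply h1J
    apply TwoSidedIdeal.subset_span
    refine ⟨g, hgG, hg0, ?_⟩
    rw [hLHg, hgeq, ← MonoidAlgebra.one_def]
  haveI : Nontrivial (QuotRing I) := by
    refine ⟨⟨1, 0, fun h => ?_⟩⟩
    rw [← RingCon.coe_one] at h
    exact h1I ((coe_zero_iff _ _).mp h)
  haveI : NoZeroDivisors (QuotRing I) := by
    constructor
    intro a b hab
    by_contra hcon
    push_neg at hcon
    obtain ⟨ha, hb⟩ := hcon
    obtain ⟨f0, rfl⟩ := quot_surj _ a
    obtain ⟨g0, rfl⟩ := quot_surj _ b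
    obtain ⟨f, hfI, hfred⟩ := exists_reduced hwfl hmul hGB f0
    obtain ⟨g, hgI, hgred⟩ := exists_reduced hwfl hmul hGB g0
    have hef : (f0 : QuotRing I) = (f : QuotRing I) :=
      (RingCon.eq _).mpr ((TwoSidedIdeal.rel_iff _ _ _).mpr hfI)
    have heg : (g0 : QuotRing I) = (g : QuotRing I) :=
      (RingCon.eq _).mpr ((TwoSidedIdeal.rel_iff _ _ _).mpr hgI)
    have hf0 : f ≠ 0 := by
      rintro rfl
      rw [hef] at ha
      exact ha ((coe_zero_iff _ _).mpr ((TwoSidedIdeal.span G).zero_mem))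
    have hg0 : g ≠ 0 := by
      rintro rfl
      rw [heg] at hb
      exact hb ((coe_zero_iff _ _).mpr ((TwoSidedIdeal.span G).zero_mem))
    have hfred' := hfred.resolve_left hf0
    have hgred' := hgred.resolve_left hg0
    have hfg : f * g ∈ I := by
      rw [← coe_zero_iff I]
      rw [RingCon.coe_mul, ← hef, ← heg]
      exact hab
    have hLHf := reduced_LH_not_mem d hgr hGB hf0 hfred'
    have hLHg := reduced_LH_not_mem d hgr hGB hg0 hgred'
    have hprod : LH d f * LH d g ∉ J := by
      intro hmem
      have h1 : ((LH d f : FreeAlg R n) : QuotRing J) ≠ 0 :=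
        fun h => hLHf ((coe_zero_iff _ _).mp h)
      have h2 : ((LH d g : FreeAlg R n) : QuotRing J) ≠ 0 :=
        fun h => hLHg ((coe_zero_iff _ _).mp h)
      have h3 : ((LH d f * LH d g : FreeAlg R n) : QuotRing J) = 0 :=
        (coe_zero_iff _ _).mpr hmem
      rw [RingCon.coe_mul] at h3
      exact (mul_ne_zero h1 h2) h3
    have hp0 : LH d f * LH d g ≠ 0 := fun h => hprod (h ▸ J.zero_mem)
    have htop := top_mul d f g
    have hfg0 : f * g ≠ 0 := by
      intro h
      rw [h, hcomp_zero] at htop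
      exact hp0 htop.symm
    obtain ⟨-, -, hLHfg, -⟩ := LMon_of_top d hgr (maxdeg_mul_le d f g) htop hp0
    have hmem := LH_mem_span d hwfl hmul hgr hGB (f * g) hfg hfg0
    rw [hLHfg] at hmem
    exact hprod hmem
  exact NoZeroDivisors.to_isDomain _
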